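/- arXiv:1209.4095 — 5 statements merged into one kernel-verified Lean document; each statement's English description precedes it below -/
import Mathlib

section
/- Let B be an n×n exchange matrix and let R be ℚ or ℝ. Then there exists an R-basis for B. -/
open scoped BigOperators

namespace MutationFanPaper

/-- An exchange matrix: a skew-symmetrizable `n × n` integer matrix. -/
def IsExchangeMatrix {n : ℕ} (B : Matrix (Fin n) (Fin n) ℤ) : Prop :=
  ∃ d : Fin n → ℤ, (∀ i, 0 < d i) ∧ ∀ i j, d i * B i j = -(d j * B j i)

/-- Matrix mutation in direction `k`. -/
def mutate {n : ℕ} (B : Matrix (Fin n) (Fin n) ℤ) (k : Fin n) : Matrix (Fin n) (Fin n) ℤ :=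
  fun i j =>
    if i = k ∨ j = k then -B i j
    else B i j + Int.sign (B k j) * max (B i k * B k j) 0

/-- The mutation map `η_k^B : ℝⁿ → ℝⁿ`. -/
noncomputable def etaStep {n : ℕ} (B : Matrix (Fin n) (Fin n) ℤ) (k : Fin n) (a : Fin n → ℝ) : Fin n → ℝ :=
  fun j =>
    if j = k then -a k
    else if 0 ≤ a k ∧ 0 ≤ B k j then a j + a k * (B k j : ℝ)
    else if a k ≤ 0 ∧ B k j ≤ 0 then a j - a k * (B k j : ℝ)
    else a j

/-- `etaSeq B κ` is the mutation map `η_κ^B`, where the list `κ` records the indices in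
order of application (the head of the list is applied first, using the matrix `B` itself). -/
noncomputable def etaSeq {n : ℕ} (B : Matrix (Fin n) (Fin n) ℤ) : List (Fin n) → (Fin n → ℝ) → Fin n → ℝ
  | [], a => a
  | k :: κ, a => etaSeq (mutate B k) κ (etaStep B k a)

/-- Iterated matrix mutation along a list of indices; the head is applied first. -/
def mutateSeq {n : ℕ} (B : Matrix (Fin n) (Fin n) ℤ) : List (Fin n) → Matrix (Fin n) (Fin n) ℤ
  | [] => B
  | k :: κ => mutateSeq (mutate B k) κ

/-- The copy of ℤ inside ℝ, as a subring. -/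
def intSR : Subring ℝ := (Int.castRingHom ℝ).range

/-- The copy of ℚ inside ℝ, as a subring. -/
noncomputable def ratSR : Subring ℝ := (Rat.castHom ℝ).range

/-- The formal expression `Σ_{i ∈ S} c i • v i` is a `B`-coherent linear relation. -/
def IsBCoherentRel {n : ℕ} (B : Matrix (Fin n) (Fin n) ℤ) {ι : Type*} (S : Finset ι)
    (v : ι → Fin n → ℝ) (c : ι → ℝ) : Prop :=
  ∀ κ : List (Fin n),
    (∑ i ∈ S, c i • etaSeq B κ (v i)) = 0 ∧
    (∑ i ∈ S, c i • (fun j => min (etaSeq B κ (v i) j) 0)) = 0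

/-- The formal expression `a - Σ_{i ∈ S} c i • v i` is a `B`-coherent linear relation. -/
def IsBCoherentDiff {n : ℕ} (B : Matrix (Fin n) (Fin n) ℤ) (a : Fin n → ℝ) {ι : Type*}
    (S : Finset ι) (v : ι → Fin n → ℝ) (c : ι → ℝ) : Prop :=
  ∀ κ : List (Fin n),
    (etaSeq B κ a - ∑ i ∈ S, c i • etaSeq B κ (v i)) = 0 ∧
    ((fun j => min (etaSeq B κ a j) 0) -
      ∑ i ∈ S, c i • (fun j => min (etaSeq B κ (v i) j) 0)) = 0

/-- The family `b` is an `R`-spanning set for `B` (a family of vectors in `Rⁿ` such that every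
`a ∈ Rⁿ` admits a `B`-coherent relation `a - Σ_{i ∈ S} c i • b i` with coefficients in `R`). -/
def SpanningOver {n : ℕ} (R : Subring ℝ) (B : Matrix (Fin n) (Fin n) ℤ) {ι : Type*}
    (b : ι → Fin n → ℝ) : Prop :=
  (∀ i j, b i j ∈ R) ∧
  ∀ a : Fin n → ℝ, (∀ j, a j ∈ R) →
    ∃ (S : Finset ι) (c : ι → ℝ), (∀ i ∈ S, c i ∈ R) ∧ IsBCoherentDiff B a S b c

/-- The family `b` is an `R`-independent set for `B`. -/
def IndependentOver {n : ℕ} (R : Subring ℝ) (B : Matrix (Fin n) (Fin n) ℤ) {ι : Type*}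
    (b : ι → Fin n → ℝ) : Prop :=
  (∀ i j, b i j ∈ R) ∧
  ∀ (S : Finset ι) (c : ι → ℝ), (∀ i ∈ S, c i ∈ R) → IsBCoherentRel B S b c →
    ∀ i ∈ S, c i = 0

/-- The family `b` is an `R`-basis for `B`. -/
def BasisOver {n : ℕ} (R : Subring ℝ) (B : Matrix (Fin n) (Fin n) ℤ) {ι : Type*}
    (b : ι → Fin n → ℝ) : Prop :=
  SpanningOver R B b ∧ IndependentOver R B b

/-- The family `b` is a positive `R`-basis for `B`. -/
def PositiveBasisOver {n : ℕ} (R : Subring ℝ) (B : Matrix (Fin n) (Fin n) ℤ) {ι : Type*}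
    (b : ι → Fin n → ℝ) : Prop :=
  BasisOver R B b ∧
  ∀ a : Fin n → ℝ, (∀ j, a j ∈ R) →
    ∃ (S : Finset ι) (c : ι → ℝ), (∀ i ∈ S, c i ∈ R ∧ 0 ≤ c i) ∧ IsBCoherentDiff B a S b c

/-- The relation `a ≡^B a'`: all mutation maps give componentwise equal signs. -/
def eqB {n : ℕ} (B : Matrix (Fin n) (Fin n) ℤ) (a a' : Fin n → ℝ) : Prop :=
  ∀ (κ : List (Fin n)) (j : Fin n),
    Real.sign (etaSeq B κ a j) = Real.sign (etaSeq B κ a' j)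

/-- A `B`-class: an equivalence class of `≡^B`. -/
def IsBClass {n : ℕ} (B : Matrix (Fin n) (Fin n) ℤ) (C : Set (Fin n → ℝ)) : Prop :=
  ∃ a, C = {a' | eqB B a a'}

/-- A `B`-cone: the closure of a `B`-class. -/
def IsBCone {n : ℕ} (B : Matrix (Fin n) (Fin n) ℤ) (C : Set (Fin n → ℝ)) : Prop :=
  ∃ D, IsBClass B D ∧ C = closure D

/-- A convex cone: a set closed under addition and positive scaling. -/
def IsConvexCone {n : ℕ} (C : Set (Fin n → ℝ)) : Prop :=
  (∀ x ∈ C, ∀ y ∈ C, x + y ∈ C) ∧ ∀ x ∈ C, ∀ r : ℝ, 0 < r → r • x ∈ C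

/-- `F` is a face of the convex cone `C`: a convex subset such that any line segment
contained in `C` whose interior meets `F` lies entirely in `F`. -/
def IsFaceOf {n : ℕ} (C F : Set (Fin n → ℝ)) : Prop :=
  F ⊆ C ∧ Convex ℝ F ∧
    ∀ x y : Fin n → ℝ, segment ℝ x y ⊆ C → (openSegment ℝ x y ∩ F).Nonempty →
      segment ℝ x y ⊆ F

/-- The mutation fan `ℱ_B`: all `B`-cones and all faces of `B`-cones. -/
def MutFan {n : ℕ} (B : Matrix (Fin n) (Fin n) ℤ) : Set (Set (Fin n → ℝ)) :=
  {C | IsBCone B C ∨ ∃ D, IsBCone B D ∧ IsFaceOf D C}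

/-- A fan: a collection of closed convex cones, closed under taking faces, in which the
intersection of any two cones is a face of each. -/
def IsFan {n : ℕ} (F : Set (Set (Fin n → ℝ))) : Prop :=
  (∀ C ∈ F, IsClosed C ∧ IsConvexCone C) ∧
  (∀ C ∈ F, ∀ G, IsFaceOf C G → G ∈ F) ∧
  ∀ C ∈ F, ∀ D ∈ F, IsFaceOf C (C ∩ D) ∧ IsFaceOf D (C ∩ D)

/-- A set of vectors is sign-coherent if no two of its members have strictly opposite
signs in any coordinate. -/
def SignCoherentSet {n : ℕ} (S : Set (Fin n → ℝ)) : Prop :=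
  ∀ x ∈ S, ∀ y ∈ S, ∀ j, ¬(x j < 0 ∧ 0 < y j)

/-- The ray spanned by a vector `v`. -/
def rayOf {n : ℕ} (v : Fin n → ℝ) : Set (Fin n → ℝ) :=
  {x | ∃ t : ℝ, 0 ≤ t ∧ x = t • v}

/-- `C` is a ray of the fan `F`: a one-dimensional cone belonging to `F`. -/
def IsRayOf {n : ℕ} (F : Set (Set (Fin n → ℝ))) (C : Set (Fin n → ℝ)) : Prop :=
  C ∈ F ∧ ∃ v : Fin n → ℝ, v ≠ 0 ∧ C = rayOf v

/-- A simplicial cone: the nonnegative span of finitely many linearly independent vectors. -/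
def IsSimplicialCone {n : ℕ} (C : Set (Fin n → ℝ)) : Prop :=
  ∃ (k : ℕ) (v : Fin k → Fin n → ℝ), LinearIndependent ℝ v ∧
    C = {x | ∃ c : Fin k → ℝ, (∀ i, 0 ≤ c i) ∧ x = ∑ i, c i • v i}

/-- A rational cone: the nonnegative span of finitely many rational vectors. -/
def IsRationalCone {n : ℕ} (C : Set (Fin n → ℝ)) : Prop :=
  ∃ (k : ℕ) (v : Fin k → Fin n → ℝ), (∀ i j, ∃ q : ℚ, v i j = (q : ℝ)) ∧
    C = {x | ∃ c : Fin k → ℝ, (∀ i, 0 ≤ c i) ∧ x = ∑ i, c i • v i}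

/-- `F'` is the rational part of the fan `F`. -/
def IsRationalPart {n : ℕ} (F F' : Set (Set (Fin n → ℝ))) : Prop :=
  IsFan F' ∧ (∀ C ∈ F', IsRationalCone C) ∧
  (∀ C ∈ F', ∃ D ∈ F, C ⊆ D) ∧
  ∀ C ∈ F, ∃ D ∈ F', D ⊆ C ∧ (∀ D' ∈ F', D' ⊆ C → D' ⊆ D) ∧
    ∀ x ∈ C, (∀ j, ∃ q : ℚ, x j = (q : ℝ)) → x ∈ D

/-- `v` is the smallest nonzero integer vector in the cone `C`. -/
def IsSmallestIntVec {n : ℕ} (C : Set (Fin n → ℝ)) (v : Fin n → ℝ) : Prop :=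
  v ∈ C ∧ v ≠ 0 ∧ (∀ j, ∃ m : ℤ, v j = (m : ℝ)) ∧
    ∀ w ∈ C, w ≠ 0 → (∀ j, ∃ m : ℤ, w j = (m : ℝ)) → ‖v‖ ≤ ‖w‖

end MutationFanPaper

namespace MutationFanPaper

/-- Auxiliary: dividing a linear relation. -/
lemma aux_sub_sum_eq_zero {M : Type*} [AddCommGroup M] [Module ℝ M] {ι : Type*}
    (T : Finset ι) (f : ι → M) (c : ι → ℝ) {ca : ℝ} (h : ca ≠ 0) (x : M)
    (hx : ca • x + ∑ i ∈ T, c i • f i = 0) :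
    x - ∑ i ∈ T, (-(c i) / ca) • f i = 0 := by
  have h1 : x = ca⁻¹ • -(∑ i ∈ T, c i • f i) := by
    rw [← eq_neg_of_add_eq_zero_left hx, smul_smul, inv_mul_cancel₀ h, one_smul]
  rw [sub_eq_zero, h1, smul_neg, Finset.smul_sum, ← Finset.sum_neg_distrib]
  refine Finset.sum_congr rfl fun i _ => ?_
  rw [smul_smul, ← neg_smul]
  congr 1
  field_simp

/-- For any exchange matrix `B` and `R = ℚ` or `R = ℝ`,
there exists an `R`-basis for `B`. -/
theorem exists_basisOver {n : ℕ} (hn : 1 ≤ n) (B : Matrix (Fin n) (Fin n) ℤ)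
    (hB : IsExchangeMatrix B) (R : Subring ℝ)
    (hR : R = ratSR ∨ R = (⊤ : Subring ℝ)) :
    ∃ V : Set (Fin n → ℝ), BasisOver R B (fun v : V => (v : Fin n → ℝ)) := by
  classical
  -- `R` is closed under inverses
  have hinv : ∀ x ∈ R, x⁻¹ ∈ R := by
    rcases hR with rfl | rfl
    · rintro x ⟨q, rfl⟩
      exact ⟨q⁻¹, map_inv₀ (Rat.castHom ℝ) q⟩
    · intro x _; trivial
  -- the ambient set and the independence predicate for plain sets
  set U : Set (Fin n → ℝ) := {a | ∀ j, a j ∈ R} with hU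
  set Indep : Set (Fin n → ℝ) → Prop := fun V =>
    ∀ S : Finset (Fin n → ℝ), ↑S ⊆ V → ∀ c : (Fin n → ℝ) → ℝ,
      (∀ i ∈ S, c i ∈ R) → IsBCoherentRel B S (fun x => x) c → ∀ i ∈ S, c i = 0
    with hIndep
  -- Zorn's lemma: a maximal independent subset of U
  obtain ⟨M, -, hM⟩ : ∃ M, (∅ : Set (Fin n → ℝ)) ⊆ M ∧
      Maximal (· ∈ {V : Set (Fin n → ℝ) | V ⊆ U ∧ Indep V}) M := by
    refine zorn_subset_nonempty _ ?_ ∅ ⟨Set.empty_subset _, ?_⟩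
    · intro ch hch hchain hne
      refine ⟨⋃₀ ch, ⟨?_, ?_⟩, fun s hs => Set.subset_sUnion_of_mem hs⟩
      · exact Set.sUnion_subset fun V hV => (hch hV).1
      · intro S hS c hc hrel i hi
        have hdir : DirectedOn (fun V W : Set (Fin n → ℝ) => V ⊆ W) ch :=
          hchain.directedOn
        have hS' : (↑S : Set (Fin n → ℝ)) ⊆ ⋃ V ∈ ch, V := by
          rwa [← Set.sUnion_eq_biUnion]
        obtain ⟨V, hVch, hSV⟩ :=
          DirectedOn.exists_mem_subset_of_finset_subset_biUnion hne hdir hS'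
        exact (hch hVch).2 S hSV c hc hrel i hi
    · intro S hS c _ _ i hi
      exact absurd (hS hi) (Set.notMem_empty _)
  have hMU : M ⊆ U := hM.prop.1
  have hMI : Indep M := hM.prop.2
  -- plain spanning property of M
  have hspan : ∀ a ∈ U, ∃ S : Finset (Fin n → ℝ), ↑S ⊆ M ∧
      ∃ c : (Fin n → ℝ) → ℝ, (∀ i ∈ S, c i ∈ R) ∧
        IsBCoherentDiff B a S (fun x => x) c := by
    intro a ha
    by_cases haM : a ∈ M
    · refine ⟨{a}, by simpa using haM, fun _ => 1, fun _ _ => one_mem R, fun κ => ?_⟩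
      constructor <;> simp
    · -- `insert a M` is not independent
      have hnotmem : insert a M ∉ {V : Set (Fin n → ℝ) | V ⊆ U ∧ Indep V} := by
        intro hmem
        exact haM (hM.2 hmem (Set.subset_insert a M) (Set.mem_insert a M))
      have hsubU : insert a M ⊆ U := Set.insert_subset ha hMU
      have hnotindep : ¬ Indep (insert a M) := fun h => hnotmem ⟨hsubU, h⟩
      simp only [hIndep] at hnotindep
      push_neg at hnotindep
      obtain ⟨S, hSsub, c, hcR, hrel, i₀, hi₀S, hi₀⟩ := hnotindep
      by_cases hca : a ∈ S ∧ c a ≠ 0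
      · obtain ⟨haS, hca0⟩ := hca
        refine ⟨S.erase a, ?_, fun v => -(c v) / (c a), ?_, ?_⟩
        · intro x hx
          rcases Finset.mem_coe.mp hx with hx'
          have hxS := Finset.mem_of_mem_erase hx'
          have hxa := Finset.ne_of_mem_erase hx'
          rcases hSsub hxS with h | h
          · exact absurd h hxa
          · exact h
        · intro i hi
          have h1 : c i ∈ R := hcR i (Finset.mem_of_mem_erase hi)
          have h2 : (c a)⁻¹ ∈ R := hinv _ (hcR a haS)
          show -c i / c a ∈ R
          rw [div_eq_mul_inv]
          exact R.mul_mem (R.neg_mem h1) h2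
        · intro κ
          obtain ⟨h1, h2⟩ := hrel κ
          constructor
          · exact aux_sub_sum_eq_zero _ _ _ hca0 _
              ((Finset.add_sum_erase S (fun i => c i • etaSeq B κ i) haS).trans h1)
          · exact aux_sub_sum_eq_zero _ _ _ hca0 _
              ((Finset.add_sum_erase S
                (fun i => c i • fun j => min (etaSeq B κ i j) 0) haS).trans h2)
      · -- contradiction with independence of M
        exfalso
        have hca0 : a ∈ S → c a = 0 := by
          intro haS
          by_contra h
          exact hca ⟨haS, h⟩
        have hsum : ∀ F : (Fin n → ℝ) → (Fin n → ℝ),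
            (∑ i ∈ S.erase a, c i • F i) = ∑ i ∈ S, c i • F i := by
          intro F
          by_cases haS : a ∈ S
          · rw [← Finset.add_sum_erase _ _ haS, hca0 haS, zero_smul, zero_add]
          · rw [Finset.erase_eq_of_notMem haS]
        have hS'sub : (↑(S.erase a) : Set (Fin n → ℝ)) ⊆ M := by
          intro x hx
          rcases Finset.mem_coe.mp hx with hx'
          have hxS := Finset.mem_of_mem_erase hx'
          have hxa := Finset.ne_of_mem_erase hx'
          rcases hSsub hxS with h | h
          · exact absurd h hxa
          · exact h
        have hrel' : IsBCoherentRel B (S.erase a) (fun x => x) c := by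
          intro κ
          obtain ⟨h1, h2⟩ := hrel κ
          exact ⟨by rw [hsum]; exact h1, by rw [hsum]; exact h2⟩
        have hzero := hMI (S.erase a) hS'sub c
          (fun i hi => hcR i (Finset.mem_of_mem_erase hi)) hrel'
        by_cases hi₀a : i₀ = a
        · exact hi₀ (hi₀a ▸ hca0 (hi₀a ▸ hi₀S))
        · exact hi₀ (hzero i₀ (Finset.mem_erase.mpr ⟨hi₀a, hi₀S⟩))
  -- assemble the basis
  refine ⟨M, ⟨?_, ?_⟩⟩
  · -- spanning
    refine ⟨fun i j => hMU i.2 j, ?_⟩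
    intro a ha
    obtain ⟨S', hS'M, c', hc'R, hdiff⟩ := hspan a ha
    have hkey : ∀ F : (Fin n → ℝ) → (Fin n → ℝ),
        (∑ v ∈ S'.subtype (· ∈ M), c' ↑v • F ↑v) = ∑ x ∈ S', c' x • F x := fun F =>
      Finset.sum_subtype_of_mem (fun x => c' x • F x) (fun x hx => hS'M hx)
    refine ⟨S'.subtype (· ∈ M), fun v => c' ↑v,
      fun i hi => hc'R ↑i (Finset.mem_subtype.mp hi), fun κ => ?_⟩
    obtain ⟨h1, h2⟩ := hdiff κ
    rw [sub_eq_zero] at h1 h2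
    constructor
    · rw [sub_eq_zero]
      exact h1.trans (hkey (fun x => etaSeq B κ x)).symm
    · rw [sub_eq_zero]
      exact h2.trans (hkey (fun x => fun j => min (etaSeq B κ x j) 0)).symm
  · -- independence
    refine ⟨fun i j => hMU i.2 j, ?_⟩
    intro S c hcR hrel i hiS
    set c'' : (Fin n → ℝ) → ℝ := fun x => if h : x ∈ M then c ⟨x, h⟩ else 0 with hc''
    have hkey : ∀ F : (Fin n → ℝ) → (Fin n → ℝ),
        (∑ x ∈ S.image Subtype.val, c'' x • F x) = ∑ v ∈ S, c v • F ↑v := by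
      intro F
      rw [Finset.sum_image (fun x _ y _ h => Subtype.val_injective h)]
      refine Finset.sum_congr rfl fun v _ => ?_
      simp [hc'', v.2]
    have himg : (↑(S.image Subtype.val) : Set (Fin n → ℝ)) ⊆ M := by
      intro x hx
      obtain ⟨v, -, rfl⟩ := Finset.mem_image.mp (Finset.mem_coe.mp hx)
      exact v.2
    have hcR' : ∀ x ∈ S.image Subtype.val, c'' x ∈ R := by
      intro x hx
      obtain ⟨v, hv, rfl⟩ := Finset.mem_image.mp hx
      simpa [hc'', v.2] using hcR v hv
    have hrel' : IsBCoherentRel B (S.image Subtype.val) (fun x => x) c'' := by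
      intro κ
      obtain ⟨h1, h2⟩ := hrel κ
      exact ⟨(hkey (fun x => etaSeq B κ x)).trans h1,
        (hkey (fun x => fun j => min (etaSeq B κ x j) 0)).trans h2⟩
    have hzero := hMI (S.image Subtype.val) himg c'' hcR' hrel'
    have := hzero ↑i (Finset.mem_image_of_mem _ hiS)
    simpa [hc'', i.2] using this

end MutationFanPaper
end

section
/- Let B be an n×n exchange matrix and let R be ℚ or ℝ. If U is an R-spanning set for B, then there exists an R-basis for B contained in U. -/
open scoped BigOperators

namespace MutationFanPaper

/-- The "coherence profile" of a vector. -/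
noncomputable def Phi {n : ℕ} (B : Matrix (Fin n) (Fin n) ℤ) (a : Fin n → ℝ) :
    List (Fin n) → (Fin n → ℝ) × (Fin n → ℝ) :=
  fun κ => (etaSeq B κ a, fun j => min (etaSeq B κ a j) 0)

lemma sum_phi_apply {n : ℕ} (B : Matrix (Fin n) (Fin n) ℤ) {ι : Type*} (S : Finset ι)
    (v : ι → Fin n → ℝ) (c : ι → ℝ) (κ : List (Fin n)) :
    (∑ i ∈ S, c i • Phi B (v i)) κ =
      (∑ i ∈ S, c i • etaSeq B κ (v i),
       ∑ i ∈ S, c i • (fun j => min (etaSeq B κ (v i) j) 0)) := by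
  simp [Phi, Finset.sum_apply, Prod.ext_iff, Prod.fst_sum, Prod.snd_sum]

lemma rel_iff {n : ℕ} (B : Matrix (Fin n) (Fin n) ℤ) {ι : Type*} (S : Finset ι)
    (v : ι → Fin n → ℝ) (c : ι → ℝ) :
    IsBCoherentRel B S v c ↔ (∑ i ∈ S, c i • Phi B (v i)) = 0 := by
  constructor
  · intro h
    funext κ
    obtain ⟨h1, h2⟩ := h κ
    rw [sum_phi_apply]
    simp [h1, h2, Prod.ext_iff]
  · intro h κ
    have := congrFun h κ
    rw [sum_phi_apply] at this
    simpa [Prod.ext_iff] using this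

lemma diff_iff {n : ℕ} (B : Matrix (Fin n) (Fin n) ℤ) (a : Fin n → ℝ) {ι : Type*}
    (S : Finset ι) (v : ι → Fin n → ℝ) (c : ι → ℝ) :
    IsBCoherentDiff B a S v c ↔ Phi B a = ∑ i ∈ S, c i • Phi B (v i) := by
  constructor
  · intro h
    funext κ
    obtain ⟨h1, h2⟩ := h κ
    rw [sum_phi_apply]
    simp only [Phi, Prod.mk.injEq]
    exact ⟨sub_eq_zero.mp h1, sub_eq_zero.mp h2⟩
  · intro h κ
    have := congrFun h κ
    rw [sum_phi_apply] at this
    exact ⟨sub_eq_zero.mpr (congrArg Prod.fst this), sub_eq_zero.mpr (congrArg Prod.snd this)⟩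

/-- Abstract extraction of an independent spanning subset over a field. -/
lemma key {K : Type*} [Field K] {M : Type*} [AddCommGroup M] [Module K M]
    {A : Type*} (f : A → M) (U : Set A) (P : A → Prop)
    (hspan : ∀ a, P a → f a ∈ Submodule.span K (f '' U)) :
    ∃ V ⊆ U, (∀ a, P a → f a ∈ Submodule.span K (f '' V)) ∧
      LinearIndependent K (fun v : V => f (v : A)) := by
  obtain ⟨b, hbU, hbspan, hbind⟩ := exists_linearIndependent K (f '' U)
  choose g hgU hgf using fun x : b => hbU x.2
  refine ⟨Set.range g, ?_, ?_, ?_⟩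
  · rintro u ⟨x, rfl⟩; exact hgU x
  · intro a ha
    have himg : f '' Set.range g = b := by
      ext y
      constructor
      · rintro ⟨u, ⟨x, rfl⟩, rfl⟩; rw [hgf]; exact x.2
      · intro hy; exact ⟨g ⟨y, hy⟩, ⟨⟨y, hy⟩, rfl⟩, hgf ⟨y, hy⟩⟩
    rw [himg, hbspan]
    exact hspan a ha
  · have hfb : ∀ v : Set.range g, f (v : A) ∈ b := by
      rintro ⟨v, x, rfl⟩; rw [hgf]; exact x.2
    let ψ : Set.range g → b := fun v => ⟨f (v : A), hfb v⟩
    have hψ : Function.Injective ψ := by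
      rintro ⟨v, x, rfl⟩ ⟨v', x', rfl⟩ h
      have h1 : (x : M) = (x' : M) := by
        have := congrArg Subtype.val h
        simpa [ψ, hgf] using this
      have h2 : x = x' := Subtype.ext h1
      simp [h2]
    have heq : (fun v : Set.range g => f (v : A)) = Subtype.val ∘ ψ := rfl
    rw [heq]
    exact hbind.comp ψ hψ

/-- Main abstract argument, parametrized by the coefficient field. -/
lemma main_aux {n : ℕ} (B : Matrix (Fin n) (Fin n) ℤ) (R : Subring ℝ)
    {K : Type} [Field K] [Module K (List (Fin n) → (Fin n → ℝ) × (Fin n → ℝ))]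
    (σ : K →+* ℝ)
    (hsm : ∀ (k : K) (w : List (Fin n) → (Fin n → ℝ) × (Fin n → ℝ)), σ k • w = k • w)
    (hRσ : ∀ x : ℝ, x ∈ R ↔ ∃ k, σ k = x)
    (U : Set (Fin n → ℝ))
    (hU : SpanningOver R B (fun u : U => (u : Fin n → ℝ))) :
    ∃ V : Set (Fin n → ℝ), V ⊆ U ∧ BasisOver R B (fun v : V => (v : Fin n → ℝ)) := by
  obtain ⟨hUR, hUspan⟩ := hU
  have hspan : ∀ a : Fin n → ℝ, (∀ j, a j ∈ R) → Phi B a ∈ Submodule.span K (Phi B '' U) := by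
    intro a ha
    obtain ⟨S, c, hc, hdiff⟩ := hUspan a ha
    rw [diff_iff] at hdiff
    have hcd : ∀ i : U, ∃ k : K, i ∈ S → σ k = c i := by
      intro i
      by_cases hi : i ∈ S
      · obtain ⟨k, hk⟩ := (hRσ (c i)).mp (hc i hi)
        exact ⟨k, fun _ => hk⟩
      · exact ⟨0, fun h => absurd h hi⟩
    choose d hd using hcd
    have hsum : (∑ i ∈ S, c i • Phi B (i : Fin n → ℝ)) = ∑ i ∈ S, d i • Phi B (i : Fin n → ℝ) := by
      refine Finset.sum_congr rfl fun i hi => ?_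
      rw [← hd i hi, hsm]
    rw [hdiff, hsum]
    exact Submodule.sum_mem _ fun i hi =>
      Submodule.smul_mem _ _ (Submodule.subset_span ⟨(i : Fin n → ℝ), i.2, rfl⟩)
  obtain ⟨V, hVU, hVspan, hVind⟩ := key (K := K) (Phi B) U (fun a => ∀ j, a j ∈ R) hspan
  refine ⟨V, hVU, ⟨?_, ?_⟩, ?_, ?_⟩
  · exact fun v j => hUR ⟨v, hVU v.2⟩ j
  · intro a ha
    have hmem := hVspan a ha
    rw [Set.image_eq_range, Finsupp.mem_span_range_iff_exists_finsupp] at hmem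
    obtain ⟨cc, hcc⟩ := hmem
    refine ⟨cc.support, fun v => σ (cc v), fun i _ => (hRσ _).mpr ⟨cc i, rfl⟩, ?_⟩
    rw [diff_iff]
    have heq : (∑ i ∈ cc.support, σ (cc i) • Phi B (i : Fin n → ℝ)) =
        ∑ i ∈ cc.support, cc i • Phi B (i : Fin n → ℝ) :=
      Finset.sum_congr rfl fun i _ => hsm (cc i) _
    rw [heq]
    exact hcc.symm
  · exact fun v j => hUR ⟨v, hVU v.2⟩ j
  · intro S c hc hrel
    rw [rel_iff] at hrel
    have hcd : ∀ i : V, ∃ k : K, i ∈ S → σ k = c i := by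
      intro i
      by_cases hi : i ∈ S
      · obtain ⟨k, hk⟩ := (hRσ (c i)).mp (hc i hi)
        exact ⟨k, fun _ => hk⟩
      · exact ⟨0, fun h => absurd h hi⟩
    choose d hd using hcd
    have hsum : (∑ i ∈ S, d i • Phi B (i : Fin n → ℝ)) = 0 := by
      rw [← hrel]
      refine Finset.sum_congr rfl fun i hi => ?_
      rw [← hd i hi, hsm]
    have := linearIndependent_iff'.mp hVind S d hsum
    intro i hi
    rw [← hd i hi, this i hi, map_zero]

/-- For any exchange matrix `B` and `R = ℚ` or `R = ℝ`, any `R`-spanning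
set `U` for `B` contains an `R`-basis for `B`. -/
theorem exists_basisOver_subset_spanning {n : ℕ} (hn : 1 ≤ n)
    (B : Matrix (Fin n) (Fin n) ℤ) (hB : IsExchangeMatrix B) (R : Subring ℝ)
    (hR : R = ratSR ∨ R = (⊤ : Subring ℝ)) (U : Set (Fin n → ℝ))
    (hU : SpanningOver R B (fun u : U => (u : Fin n → ℝ))) :
    ∃ V : Set (Fin n → ℝ), V ⊆ U ∧ BasisOver R B (fun v : V => (v : Fin n → ℝ)) := by
  rcases hR with hR | hR
  · refine main_aux B R (K := ℚ) (Rat.castHom ℝ) ?_ ?_ U hU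
    · intro q w
      rw [show ((Rat.castHom ℝ) q : ℝ) • w = (q : ℝ) • w from rfl,
        ratCast_smul_eq (E := List (Fin n) → (Fin n → ℝ) × (Fin n → ℝ)) ℝ ℚ q w,
        Rat.cast_id]
    · intro x
      rw [hR, ratSR]
      exact RingHom.mem_range
  · refine main_aux B R (K := ℝ) (RingHom.id ℝ) (fun k w => rfl) ?_ U hU
    intro x
    simp [hR]

end MutationFanPaper
end

section
/- Let B be an n×n exchange matrix having no row consisting entirely of zeros, let R be one of ℤ, ℚ, ℝ, let S be a finite set, let (v_i : i ∈ S) be vectors in ℝ^n and let (c_i : i ∈ S) be elements of R. Then Σ_{i∈S} c_i·v_i is a B-coherent linear relation if and only if Σ_{i∈S} c_i·η_κ^B(v_i) = 0 holds for every finite sequence κ of indices in [n]. -/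
open scoped BigOperators

namespace MutationFanPaper

lemma etaSeq_append_singleton {n : ℕ} (κ : List (Fin n)) (B : Matrix (Fin n) (Fin n) ℤ)
    (k : Fin n) (a : Fin n → ℝ) :
    etaSeq B (κ ++ [k]) a = etaStep (mutateSeq B κ) k (etaSeq B κ a) := by
  induction κ generalizing B a with
  | nil => rfl
  | cons h t ih =>
    show etaSeq (mutate B h) (t ++ [k]) (etaStep B h a) = _
    exact ih _ _

lemma mutate_row_ne {n : ℕ} (B : Matrix (Fin n) (Fin n) ℤ) (k : Fin n)
    (hB : ∀ i, ∃ j, j ≠ i ∧ B i j ≠ 0) (i : Fin n) :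
    ∃ j, j ≠ i ∧ mutate B k i j ≠ 0 := by
  obtain ⟨j, hji, hj⟩ := hB i
  by_cases hik : i = k
  · subst hik; exact ⟨j, hji, by simp [mutate, hj]⟩
  by_cases hBik : B i k = 0
  · have hjk : j ≠ k := by rintro rfl; exact hj hBik
    exact ⟨j, hji, by simp [mutate, hik, hjk, hBik, hj]⟩
  · exact ⟨k, fun h => hik h.symm, by simp [mutate, hBik]⟩

lemma mutateSeq_row_ne {n : ℕ} (κ : List (Fin n)) (B : Matrix (Fin n) (Fin n) ℤ)
    (hB : ∀ i, ∃ j, j ≠ i ∧ B i j ≠ 0) (i : Fin n) :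
    ∃ j, j ≠ i ∧ mutateSeq B κ i j ≠ 0 := by
  induction κ generalizing B with
  | nil => exact hB i
  | cons h t ih => exact ih (mutate B h) (mutate_row_ne B h hB)

lemma etaStep_eval {n : ℕ} (B' : Matrix (Fin n) (Fin n) ℤ) (j j' : Fin n) (hne : ¬ j' = j)
    (a : Fin n → ℝ) :
    etaStep B' j a j' = a j' + (if 0 < B' j j' then max (a j) 0 * (B' j j' : ℝ)
      else -(min (a j) 0 * (B' j j' : ℝ))) := by
  simp only [etaStep, if_neg hne]
  split_ifs with h1 h2 h3 h4 h5
  · rw [max_eq_left h1.1]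
  · have hb : ((B' j j' : ℤ) : ℝ) = 0 := by
      exact_mod_cast le_antisymm (not_lt.mp h2) h1.2
    rw [hb]; ring
  · exact absurd h4 (not_lt.mpr h3.2)
  · rw [min_eq_left h3.1]; ring
  · have ha : a j < 0 := by by_contra h; exact h1 ⟨not_lt.mp h, h5.le⟩
    rw [max_eq_right ha.le]; ring
  · have ha : 0 < a j := by by_contra h; exact h3 ⟨not_lt.mp h, not_lt.mp h5⟩
    rw [min_eq_right ha.le]; ring

/-- If no row of `B` consists entirely of zeros, then a formal expression
`Σ_{i∈S} c i • v i` with coefficients in `R` (one of ℤ, ℚ, ℝ) is a `B`-coherent linear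
relation if and only if `Σ_{i∈S} c i • η_κ^B (v i) = 0` for every finite sequence `κ`. -/
theorem isBCoherentRel_iff_of_no_zero_row {n : ℕ} (hn : 1 ≤ n)
    (B : Matrix (Fin n) (Fin n) ℤ) (hB : IsExchangeMatrix B)
    (hrow : ∀ i, ∃ j, B i j ≠ 0) (R : Subring ℝ)
    (hR : R = intSR ∨ R = ratSR ∨ R = (⊤ : Subring ℝ))
    {ι : Type} (S : Finset ι) (v : ι → Fin n → ℝ) (c : ι → ℝ)
    (hc : ∀ i ∈ S, c i ∈ R) :
    IsBCoherentRel B S v c ↔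
      ∀ κ : List (Fin n), (∑ i ∈ S, c i • etaSeq B κ (v i)) = 0 := by
  constructor
  · exact fun h κ => (h κ).1
  intro H
  -- diagonal entries of B vanish
  obtain ⟨d, hd, hskew⟩ := hB
  have hdiag : ∀ i, B i i = 0 := by
    intro i
    have h := hskew i i
    have hdne : d i ≠ 0 := (hd i).ne'
    have h0 : d i * B i i = 0 := by linarith
    exact (mul_eq_zero.mp h0).resolve_left hdne
  have hB0 : ∀ i, ∃ j, j ≠ i ∧ B i j ≠ 0 := by
    intro i
    obtain ⟨j, hj⟩ := hrow i
    refine ⟨j, ?_, hj⟩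
    rintro rfl; exact hj (hdiag _)
  intro κ
  refine ⟨H κ, ?_⟩
  funext j
  obtain ⟨j', hj'ne, hbne⟩ := mutateSeq_row_ne κ B hB0 j
  set B' := mutateSeq B κ with hB'
  set b : ℤ := B' j j' with hb
  have hne : ¬ j' = j := hj'ne
  -- linear relation at κ, coordinate j'
  have h1 : ∑ i ∈ S, c i * etaSeq B κ (v i) j' = 0 := by
    have := congrFun (H κ) j'
    simpa [Finset.sum_apply] using this
  -- linear relation at κ, coordinate j
  have h1j : ∑ i ∈ S, c i * etaSeq B κ (v i) j = 0 := by
    have := congrFun (H κ) j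
    simpa [Finset.sum_apply] using this
  -- linear relation at κ ++ [j], coordinate j'
  have h2 : ∑ i ∈ S, c i * etaStep B' j (etaSeq B κ (v i)) j' = 0 := by
    have := congrFun (H (κ ++ [j])) j'
    simpa [Finset.sum_apply, etaSeq_append_singleton] using this
  have h3 : ∑ i ∈ S, c i * (if 0 < b then max (etaSeq B κ (v i) j) 0 * (b : ℝ)
      else -(min (etaSeq B κ (v i) j) 0 * (b : ℝ))) = 0 := by
    have hsum : ∑ i ∈ S, c i * etaStep B' j (etaSeq B κ (v i)) j'
        = ∑ i ∈ S, (c i * etaSeq B κ (v i) j'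
          + c i * (if 0 < b then max (etaSeq B κ (v i) j) 0 * (b : ℝ)
            else -(min (etaSeq B κ (v i) j) 0 * (b : ℝ)))) := by
      refine Finset.sum_congr rfl fun i _ => ?_
      rw [etaStep_eval B' j j' hne]; ring
    rw [hsum, Finset.sum_add_distrib, h1, zero_add] at h2
    exact h2
  have hbR : (b : ℝ) ≠ 0 := Int.cast_ne_zero.mpr hbne
  show (∑ i ∈ S, c i • fun j => min (etaSeq B κ (v i) j) 0) j = 0
  rw [Finset.sum_apply]
  simp only [Pi.smul_apply, smul_eq_mul]
  by_cases hbpos : 0 < b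
  · -- max part vanishes, hence min part does too via min x 0 = x - max x 0
    have hmax : ∑ i ∈ S, c i * max (etaSeq B κ (v i) j) 0 = 0 := by
      have heq : (∑ i ∈ S, c i * max (etaSeq B κ (v i) j) 0) * (b : ℝ)
          = ∑ i ∈ S, c i * (if 0 < b then max (etaSeq B κ (v i) j) 0 * (b : ℝ)
            else -(min (etaSeq B κ (v i) j) 0 * (b : ℝ))) := by
        rw [Finset.sum_mul]
        refine Finset.sum_congr rfl fun i _ => ?_
        rw [if_pos hbpos]; ring
      exact (mul_eq_zero.mp (heq.trans h3)).resolve_right hbR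
    have hmin : ∀ x : ℝ, min x 0 = x - max x 0 := by
      intro x
      have := max_add_min x 0
      linarith
    calc ∑ i ∈ S, c i * min (etaSeq B κ (v i) j) 0
        = ∑ i ∈ S, (c i * etaSeq B κ (v i) j - c i * max (etaSeq B κ (v i) j) 0) := by
          refine Finset.sum_congr rfl fun i _ => ?_
          rw [hmin]; ring
      _ = 0 := by rw [Finset.sum_sub_distrib, h1j, hmax, sub_zero]
  · have heq : (∑ i ∈ S, c i * min (etaSeq B κ (v i) j) 0) * (-(b : ℝ))
        = ∑ i ∈ S, c i * (if 0 < b then max (etaSeq B κ (v i) j) 0 * (b : ℝ)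
          else -(min (etaSeq B κ (v i) j) 0 * (b : ℝ))) := by
      rw [Finset.sum_mul]
      refine Finset.sum_congr rfl fun i _ => ?_
      rw [if_neg hbpos]; ring
    have hbR' : -(b : ℝ) ≠ 0 := neg_ne_zero.mpr hbR
    exact (mul_eq_zero.mp (heq.trans h3)).resolve_right hbR'

end MutationFanPaper
end

section
/- Let B be an n×n exchange matrix. Then every B-class is a convex cone, and every B-cone is a closed convex cone. -/
open scoped BigOperators

namespace MutationFanPaper

lemma sign_cases' {x y : ℝ} (h : Real.sign x = Real.sign y) :
    (x < 0 ∧ y < 0) ∨ (x = 0 ∧ y = 0) ∨ (0 < x ∧ 0 < y) := by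
  rcases lt_trichotomy x 0 with hx | hx | hx <;> rcases lt_trichotomy y 0 with hy | hy | hy <;>
    first
      | tauto
      | (exfalso; revert h
         simp [Real.sign_of_neg, Real.sign_of_pos, hx, hy, Real.sign_zero]
         try norm_num)

lemma sign_add' {x y : ℝ} (h : Real.sign x = Real.sign y) :
    Real.sign (x + y) = Real.sign x := by
  rcases sign_cases' h with ⟨h1, h2⟩ | ⟨h1, h2⟩ | ⟨h1, h2⟩
  · rw [Real.sign_of_neg (by linarith), Real.sign_of_neg h1]
  · simp [h1, h2]
  · rw [Real.sign_of_pos (by linarith), Real.sign_of_pos h1]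

lemma sign_pos_mul {r x : ℝ} (hr : 0 < r) : Real.sign (r * x) = Real.sign x := by
  rcases lt_trichotomy x 0 with hx | hx | hx
  · rw [Real.sign_of_neg (mul_neg_of_pos_of_neg hr hx), Real.sign_of_neg hx]
  · simp [hx]
  · rw [Real.sign_of_pos (mul_pos hr hx), Real.sign_of_pos hx]

lemma etaStep_add {n : ℕ} (B : Matrix (Fin n) (Fin n) ℤ) (k : Fin n) (a a' : Fin n → ℝ)
    (h : Real.sign (a k) = Real.sign (a' k)) :
    etaStep B k (a + a') = etaStep B k a + etaStep B k a' := by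
  funext j
  simp only [etaStep, Pi.add_apply]
  by_cases hj : j = k
  · simp [hj]; ring
  · simp only [if_neg hj]
    rcases sign_cases' h with ⟨h1, h2⟩ | ⟨h1, h2⟩ | ⟨h1, h2⟩
    · have e1 : ¬ (0 ≤ a k) := not_le.2 h1
      have e2 : ¬ (0 ≤ a' k) := not_le.2 h2
      have e3 : ¬ (0 ≤ a k + a' k) := not_le.2 (by linarith)
      simp only [e1, e2, e3, false_and, if_false, le_of_lt h1, le_of_lt h2,
        (by linarith : a k + a' k ≤ 0), true_and]
      by_cases hb : B k j ≤ 0 <;> simp [hb] <;> ring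
    · simp only [h1, h2, add_zero, zero_mul, zero_add, sub_zero, le_refl, true_and]
      split_ifs <;> ring
    · have e1 : ¬ (a k ≤ 0) := not_le.2 h1
      have e2 : ¬ (a' k ≤ 0) := not_le.2 h2
      have e3 : ¬ (a k + a' k ≤ 0) := not_le.2 (by linarith)
      simp only [e1, e2, e3, false_and, if_false, le_of_lt h1, le_of_lt h2,
        (by linarith : (0:ℝ) ≤ a k + a' k), true_and]
      by_cases hb : (0:ℤ) ≤ B k j <;> simp [hb] <;> ring

lemma etaStep_smul {n : ℕ} (B : Matrix (Fin n) (Fin n) ℤ) (k : Fin n) (a : Fin n → ℝ)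
    {r : ℝ} (hr : 0 < r) : etaStep B k (r • a) = r • etaStep B k a := by
  funext j
  simp only [etaStep, Pi.smul_apply, smul_eq_mul]
  by_cases hj : j = k
  · simp only [if_pos hj]; ring
  · have h1 : (0 ≤ r * a k) ↔ 0 ≤ a k := by
      constructor
      · intro h; by_contra hc; push_neg at hc; nlinarith
      · intro h; exact mul_nonneg hr.le h
    have h2 : (r * a k ≤ 0) ↔ a k ≤ 0 := by
      constructor
      · intro h; by_contra hc; push_neg at hc; nlinarith
      · intro h; exact mul_nonpos_of_nonneg_of_nonpos hr.le h
    simp only [if_neg hj, h1, h2]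
    split_ifs <;> ring

lemma etaSeq_add {n : ℕ} : ∀ (κ : List (Fin n)) (B : Matrix (Fin n) (Fin n) ℤ)
    (a a' : Fin n → ℝ), eqB B a a' →
    etaSeq B κ (a + a') = etaSeq B κ a + etaSeq B κ a'
  | [], _, _, _, _ => rfl
  | k :: κ, B, a, a', h => by
    have hk : Real.sign (a k) = Real.sign (a' k) := h [] k
    show etaSeq (mutate B k) κ (etaStep B k (a + a')) = _
    rw [etaStep_add B k a a' hk]
    exact etaSeq_add κ (mutate B k) _ _ (fun κ' j => h (k :: κ') j)

lemma etaSeq_smul {n : ℕ} : ∀ (κ : List (Fin n)) (B : Matrix (Fin n) (Fin n) ℤ)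
    (a : Fin n → ℝ) {r : ℝ}, 0 < r →
    etaSeq B κ (r • a) = r • etaSeq B κ a
  | [], _, _, _, _ => rfl
  | k :: κ, B, a, r, hr => by
    show etaSeq (mutate B k) κ (etaStep B k (r • a)) = _
    rw [etaStep_smul B k a hr]
    exact etaSeq_smul κ (mutate B k) _ hr

/-- Every `B`-class is a convex cone, and every `B`-cone is a closed
convex cone. -/
theorem bClass_isConvexCone_and_bCone_isClosed_isConvexCone {n : ℕ} (hn : 1 ≤ n)
    (B : Matrix (Fin n) (Fin n) ℤ) (hB : IsExchangeMatrix B) :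
    (∀ C : Set (Fin n → ℝ), IsBClass B C → IsConvexCone C) ∧
    (∀ C : Set (Fin n → ℝ), IsBCone B C → IsClosed C ∧ IsConvexCone C) := by
  have key : ∀ C : Set (Fin n → ℝ), IsBClass B C → IsConvexCone C := by
    rintro C ⟨a, rfl⟩
    constructor
    · rintro x hx y hy κ j
      have hxy : eqB B x y := fun κ j => (hx κ j).symm.trans (hy κ j)
      rw [etaSeq_add κ B x y hxy, Pi.add_apply, sign_add' (hxy κ j)]
      exact hx κ j
    · rintro x hx r hr κ j
      rw [etaSeq_smul κ B x hr, Pi.smul_apply, smul_eq_mul, sign_pos_mul hr]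
      exact hx κ j
  refine ⟨key, ?_⟩
  rintro C ⟨D, hD, rfl⟩
  obtain ⟨hadd, hsmul⟩ := key D hD
  refine ⟨isClosed_closure, ?_, ?_⟩
  · intro x hx y hy
    obtain ⟨u, hu, hul⟩ := mem_closure_iff_seq_limit.1 hx
    obtain ⟨v, hv, hvl⟩ := mem_closure_iff_seq_limit.1 hy
    exact mem_closure_iff_seq_limit.2
      ⟨fun m => u m + v m, fun m => hadd _ (hu m) _ (hv m), hul.add hvl⟩
  · intro x hx r hr
    obtain ⟨u, hu, hul⟩ := mem_closure_iff_seq_limit.1 hx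
    exact mem_closure_iff_seq_limit.2
      ⟨fun m => r • u m, fun m => hsmul _ (hu m) r hr, hul.const_smul r⟩

end MutationFanPaper
end

section
/- Let B be an n×n exchange matrix, let C be a B-cone, and let κ be any finite sequence of indices in [n]. Then the mutation map η_κ^B is linear on C: there exists a linear map L : ℝ^n → ℝ^n such that η_κ^B(a) = L(a) for all a ∈ C. -/
open scoped BigOperators

namespace MutationFanPaper

/-- Closed-form expression for `etaStep`. -/
lemma etaStep_eq {n : ℕ} (B : Matrix (Fin n) (Fin n) ℤ) (k : Fin n) (a : Fin n → ℝ) (j : Fin n) :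
    etaStep B k a j =
      if j = k then -a k
      else a j + max (a k) 0 * max ((B k j : ℝ)) 0 - min (a k) 0 * min ((B k j : ℝ)) 0 := by
  unfold etaStep
  by_cases hj : j = k
  · simp [hj]
  · simp only [hj, if_false]
    rcases lt_trichotomy (a k) 0 with hak | hak | hak
    · rcases le_or_gt (B k j) 0 with hb | hb
      · have hb' : (B k j : ℝ) ≤ 0 := by exact_mod_cast hb
        rw [if_neg (by simp [not_le.mpr hak]), if_pos ⟨hak.le, hb⟩,
          max_eq_right hak.le, min_eq_left hak.le, min_eq_left hb']
        ring
      · have hb' : (0:ℝ) < (B k j : ℝ) := by exact_mod_cast hb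
        rw [if_neg (by simp [not_le.mpr hak]), if_neg (by simp [not_le.mpr hb]),
          max_eq_right hak.le, min_eq_right hb'.le]
        ring
    · rcases le_or_gt 0 (B k j) with hb | hb
      · have hb' : (0:ℝ) ≤ (B k j : ℝ) := by exact_mod_cast hb
        rw [if_pos ⟨hak.ge, hb⟩, hak]
        simp
      · have hb' : (B k j : ℝ) < 0 := by exact_mod_cast hb
        rw [if_neg (by simp [not_le.mpr hb]), if_pos ⟨hak.le, hb.le⟩, hak]
        simp
    · rcases le_or_gt 0 (B k j) with hb | hb
      · have hb' : (0:ℝ) ≤ (B k j : ℝ) := by exact_mod_cast hb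
        rw [if_pos ⟨hak.le, hb⟩, max_eq_left hak.le, min_eq_right hak.le, max_eq_left hb']
        ring
      · have hb' : (B k j : ℝ) < 0 := by exact_mod_cast hb
        rw [if_neg (by simp [not_le.mpr hb]), if_neg (by simp [not_le.mpr hak]),
          max_eq_left hak.le, min_eq_right hak.le, max_eq_right hb'.le]
        ring

lemma continuous_etaStep {n : ℕ} (B : Matrix (Fin n) (Fin n) ℤ) (k : Fin n) :
    Continuous (etaStep B k) := by
  apply continuous_pi
  intro j
  have : (fun a => etaStep B k a j) =
      fun a : Fin n → ℝ =>
        if j = k then -a k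
        else a j + max (a k) 0 * max ((B k j : ℝ)) 0 - min (a k) 0 * min ((B k j : ℝ)) 0 := by
    funext a; exact etaStep_eq B k a j
  rw [this]
  by_cases hj : j = k
  · simp only [hj, if_pos rfl]
    exact (continuous_apply k).neg
  · simp only [hj, if_false]
    exact (((continuous_apply j).add
      (((continuous_apply k).max continuous_const).mul continuous_const)).sub
      (((continuous_apply k).min continuous_const).mul continuous_const))

lemma continuous_etaSeq {n : ℕ} (κ : List (Fin n)) (B : Matrix (Fin n) (Fin n) ℤ) :
    Continuous (etaSeq B κ) := by
  induction κ generalizing B with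
  | nil => exact continuous_id
  | cons k κ ih =>
    show Continuous fun a => etaSeq (mutate B k) κ (etaStep B k a)
    exact (ih (mutate B k)).comp (continuous_etaStep B k)

/-- The linear map giving one mutation step on a region of fixed sign. -/
noncomputable def stepLin {n : ℕ} (k : Fin n) (c : Fin n → ℝ) :
    (Fin n → ℝ) →ₗ[ℝ] (Fin n → ℝ) :=
  LinearMap.pi fun j =>
    if j = k then -(LinearMap.proj k) else LinearMap.proj j + c j • LinearMap.proj k

lemma stepLin_apply {n : ℕ} (k : Fin n) (c : Fin n → ℝ) (a : Fin n → ℝ) (j : Fin n) :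
    stepLin k c a j = if j = k then -a k else a j + c j * a k := by
  by_cases hj : j = k <;> simp [stepLin, hj]

lemma sign_pos_of_eq {x y : ℝ} (h : Real.sign x = Real.sign y) (hy : 0 < y) : 0 < x := by
  rw [Real.sign_of_pos hy] at h
  rcases lt_trichotomy x 0 with hx | hx | hx
  · rw [Real.sign_of_neg hx] at h; norm_num at h
  · rw [hx, Real.sign_zero] at h; norm_num at h
  · exact hx

lemma sign_neg_of_eq {x y : ℝ} (h : Real.sign x = Real.sign y) (hy : y < 0) : x < 0 := by
  rw [Real.sign_of_neg hy] at h
  rcases lt_trichotomy x 0 with hx | hx | hx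
  · exact hx
  · rw [hx, Real.sign_zero] at h; norm_num at h
  · rw [Real.sign_of_pos hx] at h; norm_num at h

/-- On each `B`-class, `etaSeq B κ` agrees with a linear map. -/
lemma etaSeq_linear_on_class {n : ℕ} (κ : List (Fin n)) (B : Matrix (Fin n) (Fin n) ℤ)
    (a₀ : Fin n → ℝ) :
    ∃ L : (Fin n → ℝ) →ₗ[ℝ] (Fin n → ℝ), ∀ a, eqB B a₀ a → etaSeq B κ a = L a := by
  induction κ generalizing B a₀ with
  | nil => exact ⟨LinearMap.id, fun a _ => rfl⟩
  | cons k κ ih =>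
    obtain ⟨L', hL'⟩ := ih (mutate B k) (etaStep B k a₀)
    set c : Fin n → ℝ := fun j =>
      if 0 < a₀ k then ((max (B k j) 0 : ℤ) : ℝ)
      else if a₀ k < 0 then -((min (B k j) 0 : ℤ) : ℝ) else 0 with hc
    refine ⟨L'.comp (stepLin k c), fun a ha => ?_⟩
    have hsign : Real.sign (a k) = Real.sign (a₀ k) := by
      have := ha [] k
      simpa [etaSeq] using this.symm
    have hstep : etaStep B k a = stepLin k c a := by
      funext j
      rw [etaStep_eq, stepLin_apply]
      by_cases hj : j = k
      · simp [hj]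
      · simp only [hj, if_false, hc]
        rcases lt_trichotomy (a₀ k) 0 with h0 | h0 | h0
        · have hak : a k < 0 := sign_neg_of_eq hsign h0
          rw [if_neg (by linarith), if_pos h0, max_eq_right hak.le, min_eq_left hak.le]
          push_cast
          ring
        · have hak : a k = 0 := by
            have := hsign
            rw [h0, Real.sign_zero, Real.sign_eq_zero_iff] at this
            exact this
          rw [if_neg (by rw [h0]; exact lt_irrefl 0), if_neg (by rw [h0]; exact lt_irrefl 0), hak]
          simp
        · have hak : 0 < a k := sign_pos_of_eq hsign h0
          rw [if_pos h0, max_eq_left hak.le, min_eq_right hak.le]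
          push_cast
          ring
    have ha' : eqB (mutate B k) (etaStep B k a₀) (etaStep B k a) := by
      intro κ' j
      exact ha (k :: κ') j
    calc etaSeq B (k :: κ) a = etaSeq (mutate B k) κ (etaStep B k a) := rfl
      _ = L' (etaStep B k a) := hL' _ ha'
      _ = L' (stepLin k c a) := by rw [hstep]
      _ = (L'.comp (stepLin k c)) a := rfl

end MutationFanPaper

namespace MutationFanPaper

/-- Every mutation map `η_κ^B` is linear on every `B`-cone. -/
theorem etaSeq_linear_on_bCone {n : ℕ} (hn : 1 ≤ n) (B : Matrix (Fin n) (Fin n) ℤ)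
    (hB : IsExchangeMatrix B) (C : Set (Fin n → ℝ)) (hC : IsBCone B C)
    (κ : List (Fin n)) :
    ∃ L : (Fin n → ℝ) →ₗ[ℝ] (Fin n → ℝ), ∀ a ∈ C, etaSeq B κ a = L a := by
  obtain ⟨D, ⟨a₀, hD⟩, hCD⟩ := hC
  obtain ⟨L, hL⟩ := etaSeq_linear_on_class κ B a₀
  refine ⟨L, fun a ha => ?_⟩
  have heq : Set.EqOn (etaSeq B κ) L D := by
    intro x hx
    rw [hD] at hx
    exact hL x hx
  have := heq.closure (continuous_etaSeq κ B) L.continuous_of_finiteDimensional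
  rw [hCD] at ha
  exact this ha

end MutationFanPaper
end
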